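/- For a binary AdaBoost run with normalization factors Zₜ = Σᵢ Dₜ(i)exp(-αₜ yᵢ hₜ(xᵢ)), the training error of the final classifier satisfies (1/n)Σᵢ 𝟙[yᵢ Σₜ αₜhₜ(xᵢ) ≤ 0] ≤ ∏ₜ₌₁ᵀ Zₜ. -/

import Mathlib

open Finset Real

/-- Training error of the AdaBoost combined classifier is bounded by the product of
the normalization factors `Zₜ`. -/
theorem adaboost_training_error_le_prod_Z
    (n T : ℕ) (hn : 0 < n)
    (y : Fin n → ℝ) (h : Fin T → Fin n → ℝ)
    (hy : ∀ i, y i = -1 ∨ y i = 1)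
    (hh : ∀ t i, h t i = -1 ∨ h t i = 1)
    (α : Fin T → ℝ) (Z : Fin T → ℝ)
    (D : Fin (T + 1) → Fin n → ℝ)
    (hD1 : ∀ i, D 0 i = 1 / n)
    (hZ : ∀ t : Fin T, Z t = ∑ i, D t.castSucc i * Real.exp (-(α t * y i * h t i)))
    (hDrec : ∀ (t : Fin T) (i : Fin n),
      D t.succ i = D t.castSucc i * Real.exp (-(α t * y i * h t i)) / Z t) :
    (1 / n : ℝ) * ∑ i, (if y i * ∑ t, α t * h t i ≤ 0 then (1:ℝ) else 0)
      ≤ ∏ t, Z t := by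
  have hne : (Finset.univ : Finset (Fin n)).Nonempty := by
    have : Nonempty (Fin n) := ⟨⟨0, hn⟩⟩
    exact Finset.univ_nonempty
  have hnpos : (0:ℝ) < n := by exact_mod_cast hn
  -- positivity of D and Z
  have hpos : ∀ t : Fin (T+1), ∀ i, 0 < D t i := by
    intro t
    induction t using Fin.induction with
    | zero => intro i; rw [hD1]; positivity
    | succ t ih =>
      intro i
      have hZpos : 0 < Z t := by
        rw [hZ]
        exact Finset.sum_pos (fun j _ => mul_pos (ih j) (Real.exp_pos _)) hne
      rw [hDrec]
      exact div_pos (mul_pos (ih i) (Real.exp_pos _)) hZpos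
  have hZpos : ∀ t : Fin T, 0 < Z t := by
    intro t
    rw [hZ]
    exact Finset.sum_pos (fun j _ => mul_pos (hpos _ j) (Real.exp_pos _)) hne
  -- sum of D t is 1
  have hsum : ∀ t : Fin (T+1), ∑ i, D t i = 1 := by
    intro t
    induction t using Fin.induction with
    | zero =>
      simp only [hD1]
      rw [Finset.sum_const, Finset.card_univ, Fintype.card_fin]
      rw [nsmul_eq_mul, mul_one_div_cancel hnpos.ne']
    | succ t ih =>
      have : ∑ i, D t.succ i = (∑ i, D t.castSucc i * Real.exp (-(α t * y i * h t i))) / Z t := by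
        rw [Finset.sum_div]
        exact Finset.sum_congr rfl (fun i _ => hDrec t i)
      rw [this, ← hZ t, div_self (hZpos t).ne']
  -- key telescoping identity
  have hkey : ∀ (t : Fin (T+1)) (i : Fin n),
      D t i * ∏ s ∈ Finset.univ.filter (fun s : Fin T => (s : ℕ) < (t : ℕ)), Z s
        = (1 / n) * Real.exp (-(y i * ∑ s ∈ Finset.univ.filter
            (fun s : Fin T => (s : ℕ) < (t : ℕ)), α s * h s i)) := by
    intro t
    induction t using Fin.induction with
    | zero =>
      intro i
      simp [hD1]
    | succ t ih =>
      intro i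
      have hfilt : Finset.univ.filter (fun s : Fin T => (s : ℕ) < ((t.succ : Fin (T+1)) : ℕ))
          = insert t (Finset.univ.filter (fun s : Fin T => (s : ℕ) < ((t.castSucc : Fin (T+1)) : ℕ))) := by
        ext s
        simp only [Finset.mem_filter, Finset.mem_univ, true_and, Finset.mem_insert,
          Fin.val_succ, Fin.coe_castSucc]
        rw [Fin.ext_iff]
        omega
      have hnot : t ∉ Finset.univ.filter (fun s : Fin T => (s : ℕ) < ((t.castSucc : Fin (T+1)) : ℕ)) := by
        simp
      rw [hfilt, Finset.prod_insert hnot, Finset.sum_insert hnot, hDrec t i,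
        div_mul_eq_mul_div, mul_comm (Z t), ← mul_assoc, mul_div_assoc,
        div_self (hZpos t).ne', mul_one, mul_assoc, mul_comm (Real.exp _), ← mul_assoc, ih i,
        mul_assoc, ← Real.exp_add]
      congr 1
      congr 1
      ring
  -- at t = last T the filter is univ
  have hlast : ∀ i, D (Fin.last T) i * ∏ s, Z s
      = (1 / n) * Real.exp (-(y i * ∑ s, α s * h s i)) := by
    intro i
    have hf : Finset.univ.filter (fun s : Fin T => (s : ℕ) < ((Fin.last T : Fin (T+1)) : ℕ))
        = Finset.univ := by
      ext s; simp [Fin.is_lt]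
    have := hkey (Fin.last T) i
    rwa [hf] at this
  -- main chain
  have h1 : (1 / n : ℝ) * ∑ i, (if y i * ∑ t, α t * h t i ≤ 0 then (1:ℝ) else 0)
      ≤ ∑ i, (1 / n) * Real.exp (-(y i * ∑ s, α s * h s i)) := by
    rw [Finset.mul_sum]
    apply Finset.sum_le_sum
    intro i _
    apply mul_le_mul_of_nonneg_left _ (by positivity)
    split_ifs with hif
    · exact Real.one_le_exp (by linarith)
    · exact (Real.exp_pos _).le
  calc (1 / n : ℝ) * ∑ i, (if y i * ∑ t, α t * h t i ≤ 0 then (1:ℝ) else 0)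
      ≤ ∑ i, (1 / n) * Real.exp (-(y i * ∑ s, α s * h s i)) := h1
    _ = ∑ i, D (Fin.last T) i * ∏ s, Z s := by
        exact (Finset.sum_congr rfl (fun i _ => (hlast i))).symm
    _ = (∑ i, D (Fin.last T) i) * ∏ s, Z s := by rw [Finset.sum_mul]
    _ = ∏ s, Z s := by rw [hsum, one_mul]
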